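/- If M and N are rectangle persistence modules with rectangles (a₁,b₁)×(a₂,b₂) and (c₁,d₁)×(c₂,d₂) that are ε-interleaved via morphisms f: M → N(ε) and g: N → M(ε), and at least one of f, g is the zero morphism, then ε ≥ max{ min_i (b_i−a_i)/2 , min_i (d_i−c_i)/2 }. -/

import Mathlib

open Classical

noncomputable section

/-- A point of the parameter space `ℝⁿ`. -/
abbrev Pt (n : ℕ) := Fin n → ℝ

/-- Shift of a point by the diagonal vector `(ε, …, ε)`. -/
def shiftPt {n : ℕ} (u : Pt n) (ε : ℝ) : Pt n := fun i => u i + ε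

lemma shiftPt_mono {n : ℕ} {u v : Pt n} (ε : ℝ) (h : u ≤ v) :
    shiftPt u ε ≤ shiftPt v ε := fun i => by simp only [shiftPt]; linarith [h i]

lemma le_shiftPt {n : ℕ} (u : Pt n) {ε : ℝ} (hε : 0 ≤ ε) : u ≤ shiftPt u ε :=
  fun i => le_add_of_nonneg_right hε

/-- An `n`-parameter persistence module over the field `k`. -/
structure PersMod (k : Type) [Field k] (n : ℕ) where
  obj : Pt n → Type
  [acg : ∀ u, AddCommGroup (obj u)]
  [mod : ∀ u, Module k (obj u)]
  map : ∀ {u v : Pt n}, u ≤ v → (obj u →ₗ[k] obj v)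
  map_id : ∀ u : Pt n, map (le_refl u) = LinearMap.id
  map_comp : ∀ {u v w : Pt n} (h1 : u ≤ v) (h2 : v ≤ w),
    (map h2).comp (map h1) = map (h1.trans h2)

attribute [instance] PersMod.acg PersMod.mod

variable {k : Type} [Field k] {n : ℕ}

/-- A morphism of persistence modules. -/
structure PersHom (M N : PersMod k n) where
  app : ∀ u, M.obj u →ₗ[k] N.obj u
  natural : ∀ {u v : Pt n} (h : u ≤ v),
    (app v).comp (M.map h) = (N.map h).comp (app u)

/-- A morphism is trivial when every component is the zero map. -/
def PersHom.Trivial {M N : PersMod k n} (f : PersHom M N) : Prop := ∀ u, f.app u = 0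

/-- The `ε`-shift of a persistence module. -/
def PersMod.shift (M : PersMod k n) (ε : ℝ) : PersMod k n where
  obj u := M.obj (shiftPt u ε)
  map h := M.map (shiftPt_mono ε h)
  map_id u := M.map_id _
  map_comp h1 h2 := M.map_comp _ _

/-- `(f, g)` is an `ε`-interleaving pair between `M` and `N`. -/
def IsInterleavingPair (M N : PersMod k n) (ε : ℝ) (hε : 0 ≤ ε)
    (f : PersHom M (N.shift ε)) (g : PersHom N (M.shift ε)) : Prop :=
  (∀ u : Pt n, (g.app (shiftPt u ε)).comp (f.app u) =
      M.map ((le_shiftPt u hε).trans (le_shiftPt _ hε))) ∧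
  (∀ u : Pt n, (f.app (shiftPt u ε)).comp (g.app u) =
      N.map ((le_shiftPt u hε).trans (le_shiftPt _ hε)))

/-- `M` and `N` are `ε`-interleaved. -/
def Interleaved (M N : PersMod k n) (ε : ℝ) : Prop :=
  ∃ (hε : 0 ≤ ε) (f : PersHom M (N.shift ε)) (g : PersHom N (M.shift ε)),
    IsInterleavingPair M N ε hε f g

/-- The interleaving distance, with value in the extended reals. -/
def interleavingDist (M N : PersMod k n) : EReal :=
  sInf {x : EReal | ∃ ε : ℝ, Interleaved M N ε ∧ x = (ε : EReal)}

/-- `M` is `ε`-trivial : all transition maps `M_u → M_{u+(ε,…,ε)}` vanish. -/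
def EpsTrivial (M : PersMod k n) (ε : ℝ) : Prop :=
  ∀ (u : Pt n) (h : u ≤ shiftPt u ε), M.map h = 0

/-- The zero persistence module. -/
def ZeroMod (k : Type) [Field k] (n : ℕ) : PersMod k n where
  obj _ := PUnit
  map _ := 0
  map_id _ := by apply LinearMap.ext; intro x; exact Subsingleton.elim _ _
  map_comp _ _ := by apply LinearMap.ext; intro x; exact Subsingleton.elim _ _

/-- The space at `u` of the interval module on `I` : all of `k` if `u ∈ I`, `0` otherwise. -/
def segSpace (k : Type) [Field k] {n : ℕ} (I : Set (Pt n)) (u : Pt n) : Submodule k k where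
  carrier := {x | u ∉ I → x = 0}
  add_mem' := by intro x y hx hy h; simp only [Set.mem_setOf_eq] at *; rw [hx h, hy h, add_zero]
  zero_mem' := fun _ => rfl
  smul_mem' := by intro c x hx h; simp only [Set.mem_setOf_eq] at *; rw [hx h, smul_zero]

/-- The interval persistence module on an order-convex set `I` : `k` on `I` with identity
internal transition maps, `0` elsewhere. -/
def IntervalMod (k : Type) [Field k] {n : ℕ} (I : Set (Pt n)) (hI : I.OrdConnected) :
    PersMod k n where
  obj u := segSpace k I u
  map {u v} h :=
    { toFun := fun x => ⟨if v ∈ I then (x : k) else 0, by intro hv; simp [hv]⟩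
      map_add' := by intro x y; apply Subtype.ext; by_cases hv : v ∈ I <;> simp [hv]
      map_smul' := by intro c x; apply Subtype.ext; by_cases hv : v ∈ I <;> simp [hv] }
  map_id u := by
    apply LinearMap.ext; intro x
    apply Subtype.ext
    by_cases hu : u ∈ I
    · simp [hu]
    · simp [hu, x.2 hu]
  map_comp {u v w} h1 h2 := by
    apply LinearMap.ext; intro x
    apply Subtype.ext
    by_cases hw : w ∈ I
    · by_cases hv : v ∈ I
      · simp [hw, hv]
      · by_cases hu : u ∈ I
        · exact absurd (hI.out hu hw ⟨h1, h2⟩) hv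
        · simp [hw, hv, x.2 hu]
    · simp [hw]

/-- The open box `∏ᵢ (aᵢ, bᵢ)` with extended-real endpoints. -/
def box {n : ℕ} (a b : Fin n → EReal) : Set (Pt n) :=
  {u | ∀ i, a i < (u i : EReal) ∧ (u i : EReal) < b i}

lemma box_ordConnected {n : ℕ} (a b : Fin n → EReal) : (box a b).OrdConnected := by
  constructor
  intro u hu w hw v hv i
  exact ⟨lt_of_lt_of_le (hu i).1 (by exact_mod_cast hv.1 i),
    lt_of_le_of_lt (by exact_mod_cast hv.2 i) (hw i).2⟩

/-- The rectangle persistence module with underlying open rectangle `∏ᵢ (aᵢ, bᵢ)`. -/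
def RectMod (k : Type) [Field k] {n : ℕ} (a b : Fin n → EReal) : PersMod k n :=
  IntervalMod k (box a b) (box_ordConnected a b)

/-- Subtraction of extended reals with the conventions `(±∞) − (±∞) = 0`. -/
def esub (x y : EReal) : EReal :=
  if (x = ⊤ ∧ y = ⊤) ∨ (x = ⊥ ∧ y = ⊥) then 0 else x - y

/-- Absolute value on the extended reals (`|±∞| = +∞`). -/
def eabs (x : EReal) : EReal := max x (-x)

/-- The `ℓ^∞`-distance `‖x − y‖_∞` on extended `ℝⁿ`. -/
def supDist {n : ℕ} (x y : Fin n → EReal) : EReal := ⨆ i, eabs (esub (x i) (y i))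

/-- The closed formula for the interleaving distance between the rectangle modules with
rectangles `∏ (aᵢ, bᵢ)` and `∏ (cᵢ, dᵢ)`. -/
def dIFormula {n : ℕ} (a b c d : Fin n → EReal) : EReal :=
  min (max (⨅ i, esub (b i) (a i) / 2) (⨅ i, esub (d i) (c i) / 2))
      (max (supDist c a) (supDist d b))

/-- `M` and `N` are isomorphic persistence modules. -/
def PersIso (M N : PersMod k n) : Prop :=
  ∃ f : PersHom M N, ∀ u, Function.Bijective (f.app u)

/-- `M` is a non-zero persistence module. -/
def PersMod.Nonzero (M : PersMod k n) : Prop := ∃ (u : Pt n) (x : M.obj u), x ≠ 0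

/-- Direct sum of two persistence modules. -/
def dirSum (M N : PersMod k n) : PersMod k n where
  obj u := M.obj u × N.obj u
  map h := (M.map h).prodMap (N.map h)
  map_id u := by
    apply LinearMap.ext; intro x
    show ((M.map (le_refl u)) x.1, (N.map (le_refl u)) x.2) = x
    rw [M.map_id, N.map_id]; rfl
  map_comp h1 h2 := by
    apply LinearMap.ext; intro x
    show ((M.map _) ((M.map _) x.1), (N.map _) ((N.map _) x.2))
      = ((M.map _) x.1, (N.map _) x.2)
    have hM : (M.map h2) ((M.map h1) x.1) = (M.map (h1.trans h2)) x.1 := by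
      rw [← M.map_comp h1 h2]; rfl
    have hN : (N.map h2) ((N.map h1) x.2) = (N.map (h1.trans h2)) x.2 := by
      rw [← N.map_comp h1 h2]; rfl
    rw [hM, hN]

/-- Zigzag-connectedness of a subset of `ℝⁿ`. -/
def ZigzagConnected {n : ℕ} (I : Set (Pt n)) : Prop :=
  ∀ u ∈ I, ∀ v ∈ I,
    Relation.ReflTransGen (fun x y => x ∈ I ∧ y ∈ I ∧ (x ≤ y ∨ y ≤ x)) u v

/-- `I` is an interval in `ℝⁿ`: nonempty, order-convex and zigzag-connected. -/
def IsInterval {n : ℕ} (I : Set (Pt n)) : Prop :=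
  I.Nonempty ∧ I.OrdConnected ∧ ZigzagConnected I

/-- A partial multibijection `Fin m ⇸ Fin k'`, encoded by an `Option`-valued map that is
injective on matched indices. -/
def PartialInj {m k' : ℕ} (σ : Fin m → Option (Fin k')) : Prop :=
  ∀ i j l, σ i = some l → σ j = some l → i = j

/-- `σ` is an `ε`-matching between the barcodes `A` and `B` (families of intervals). -/
def IsEpsMatching (k : Type) [Field k] {n m k' : ℕ}
    (A : Fin m → Set (Pt n)) (hA : ∀ i, (A i).OrdConnected)
    (B : Fin k' → Set (Pt n)) (hB : ∀ j, (B j).OrdConnected)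
    (σ : Fin m → Option (Fin k')) (ε : ℝ) : Prop :=
  PartialInj σ ∧
  (∀ i, σ i = none → EpsTrivial (IntervalMod k (A i) (hA i)) (2 * ε)) ∧
  (∀ j, (∀ i, σ i ≠ some j) → EpsTrivial (IntervalMod k (B j) (hB j)) (2 * ε)) ∧
  (∀ i j, σ i = some j →
    Interleaved (IntervalMod k (A i) (hA i)) (IntervalMod k (B j) (hB j)) ε)

/-- The bottleneck distance between the interval decomposable modules with barcodes
`A` and `B`. -/
def bottleneckDist (k : Type) [Field k] {n m k' : ℕ}
    (A : Fin m → Set (Pt n)) (hA : ∀ i, (A i).OrdConnected)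
    (B : Fin k' → Set (Pt n)) (hB : ∀ j, (B j).OrdConnected) : EReal :=
  sInf {x : EReal | ∃ (ε : ℝ) (σ : Fin m → Option (Fin k')),
    0 ≤ ε ∧ IsEpsMatching k A hA B hB σ ε ∧ x = (ε : EReal)}

lemma exists_gap (a b : EReal) (ha : a ≠ ⊤) (hb : b ≠ ⊥) (ε : ℝ)
    (h : (ε : EReal) < esub b a / 2) :
    ∃ x : ℝ, a < (x : EReal) ∧ ((x + 2 * ε : ℝ) : EReal) < b := by
  induction a using EReal.rec with
  | top => exact absurd rfl ha
  | bot =>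
    induction b using EReal.rec with
    | bot => exact absurd rfl hb
    | coe β =>
      exact ⟨β - 2*ε - 1, EReal.bot_lt_coe _,
        by exact_mod_cast (by linarith : β - 2*ε - 1 + 2*ε < β)⟩
    | top => exact ⟨0, EReal.bot_lt_coe _, EReal.coe_lt_top _⟩
  | coe α =>
    induction b using EReal.rec with
    | bot => exact absurd rfl hb
    | coe β =>
      have he : esub (β : EReal) (α : EReal) = ((β - α : ℝ) : EReal) := by
        simp [esub]
      rw [he] at h
      have h2 : ((2:ℝ) : EReal) = (2 : EReal) := by norm_cast
      rw [← h2, ← EReal.coe_div, EReal.coe_lt_coe_iff] at h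
      exact ⟨(α + β)/2 - ε, by exact_mod_cast (by linarith : α < (α+β)/2 - ε),
        by exact_mod_cast (by linarith : (α+β)/2 - ε + 2*ε < β)⟩
    | top => exact ⟨α + 1, by exact_mod_cast (by linarith : α < α + 1), EReal.coe_lt_top _⟩

lemma IntervalMod_map_ne_zero {k : Type} [Field k] {n : ℕ} {I : Set (Pt n)}
    (hI : I.OrdConnected) {u v : Pt n} (h : u ≤ v) (hu : u ∈ I) (hv : v ∈ I) :
    (IntervalMod k I hI).map h ≠ 0 := by
  intro hz
  set x0 : segSpace k I u := ⟨1, fun hh => absurd hu hh⟩ with hx0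
  have y : ((IntervalMod k I hI).map h) x0 = ⟨1, fun hh => absurd hv hh⟩ := by
    apply Subtype.ext
    show (if v ∈ I then ((x0 : k)) else 0) = 1
    simp [hv, hx0]
  rw [hz] at y
  have := congrArg Subtype.val y
  simp at this
  exact one_ne_zero (this.symm.trans (rfl : _ = (0 : k)))

lemma key_triv {k : Type} [Field k] {n : ℕ} (a b : Fin n → EReal)
    (ha : ∀ i, a i ≠ ⊤) (hb : ∀ i, b i ≠ ⊥) (ε : ℝ) (hε : 0 ≤ ε)
    (hcomp : ∀ u : Pt n,
      (RectMod k a b).map ((le_shiftPt u hε).trans (le_shiftPt (shiftPt u ε) hε)) = 0) :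
    (⨅ i, esub (b i) (a i) / 2) ≤ (ε : EReal) := by
  by_contra hlt
  push_neg at hlt
  have hi : ∀ i, (ε : EReal) < esub (b i) (a i) / 2 :=
    fun i => lt_of_lt_of_le hlt (iInf_le _ i)
  choose x hx1 hx2 using fun i => exists_gap (a i) (b i) (ha i) (hb i) ε (hi i)
  have hu : x ∈ box a b := by
    intro i
    refine ⟨hx1 i, lt_of_le_of_lt ?_ (hx2 i)⟩
    exact_mod_cast (by linarith [hε] : x i ≤ x i + 2 * ε)
  have hv : shiftPt (shiftPt x ε) ε ∈ box a b := by
    intro i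
    have hvi : shiftPt (shiftPt x ε) ε i = x i + 2 * ε := by
      simp [shiftPt]; ring
    rw [hvi]
    refine ⟨lt_of_lt_of_le (hx1 i) ?_, hx2 i⟩
    exact_mod_cast (by linarith [hε] : x i ≤ x i + 2 * ε)
  exact IntervalMod_map_ne_zero (box_ordConnected a b)
    ((le_shiftPt x hε).trans (le_shiftPt (shiftPt x ε) hε)) hu hv (hcomp x)

theorem eps_ge_of_trivial_interleaving (a b c d : Fin 2 → EReal)
    (ha : ∀ i, a i ≠ ⊤) (hb : ∀ i, b i ≠ ⊥)
    (hc : ∀ i, c i ≠ ⊤) (hd : ∀ i, d i ≠ ⊥) (hab : ∀ i, a i < b i) (hcd : ∀ i, c i < d i)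
    (ε : ℝ) (hε : 0 ≤ ε)
    (f : PersHom (RectMod k a b) ((RectMod k c d).shift ε))
    (g : PersHom (RectMod k c d) ((RectMod k a b).shift ε))
    (hfg : IsInterleavingPair (RectMod k a b) (RectMod k c d) ε hε f g)
    (htriv : f.Trivial ∨ g.Trivial) :
    max (⨅ i, esub (b i) (a i) / 2) (⨅ i, esub (d i) (c i) / 2) ≤ (ε : EReal) := by
  have hcompM : ∀ u, ((g.app (shiftPt u ε)).comp (f.app u)) = 0 := by
    intro u
    rcases htriv with hf | hg
    · rw [hf u]; exact LinearMap.comp_zero _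
    · rw [hg (shiftPt u ε)]; exact LinearMap.zero_comp _
  have hcompN : ∀ u, ((f.app (shiftPt u ε)).comp (g.app u)) = 0 := by
    intro u
    rcases htriv with hf | hg
    · rw [hf (shiftPt u ε)]; exact LinearMap.zero_comp _
    · rw [hg u]; exact LinearMap.comp_zero _
  have hM : (⨅ i, esub (b i) (a i) / 2) ≤ (ε : EReal) := by
    apply key_triv (k := k) a b ha hb ε hε
    intro u
    rw [← hfg.1 u, hcompM u]; rfl
  have hN : (⨅ i, esub (d i) (c i) / 2) ≤ (ε : EReal) := by
    apply key_triv (k := k) c d hc hd ε hε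
    intro u
    rw [← hfg.2 u, hcompN u]; rfl
  exact max_le hM hN

end
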